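/- Let F be a Borel probability measure on ℝ^q, M ∈ L²(F) nonnegative, and X ∼ F. Define Ω_M(x,h) = ∫_{B_∞(x,h)} M dF. If lim_{h↓0} E[(F(B_∞(X,h)))³]/(E[F(B_∞(X,h))])² = 0, then E[Ω_M(X,h)²] = o(E[F(B_∞(X,h))]) as h ↓ 0. -/

import Mathlib

open MeasureTheory Metric Set Filter Topology
open scoped ENNReal

private lemma cs_aux {α : Type*} [MeasurableSpace α] (μ : Measure α) [IsFiniteMeasure μ]
    {g : α → ℝ} (hg0 : ∀ x, 0 ≤ g x) (hg : MemLp g 2 μ) :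
    (∫ x, g x ∂μ) ^ 2 ≤ (μ Set.univ).toReal * ∫ x, g x ^ 2 ∂μ := by
  have hpq : Real.HolderConjugate 2 2 := Real.holderConjugate_iff.mpr ⟨by norm_num, by norm_num⟩
  have h2 : (ENNReal.ofReal 2) = (2 : ℝ≥0∞) := by
    rw [ENNReal.ofReal_ofNat]
  have hone : MemLp (fun _ : α => (1:ℝ)) (ENNReal.ofReal 2) μ := by
    rw [h2]; exact memLp_const 1
  have h := integral_mul_le_Lp_mul_Lq_of_nonneg hpq (ae_of_all _ hg0)
      (ae_of_all _ fun _ => zero_le_one) (h2 ▸ hg) hone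
  simp only [mul_one] at h
  have hS : ∫ x, g x ^ (2:ℝ) ∂μ = ∫ x, g x ^ 2 ∂μ := by
    refine integral_congr_ae (ae_of_all _ fun x => ?_)
    show g x ^ (2:ℝ) = g x ^ (2:ℕ)
    rw [show (2:ℝ) = ((2:ℕ):ℝ) by norm_num, Real.rpow_natCast]
  have hT : ∫ x, (1:ℝ) ^ (2:ℝ) ∂μ = (μ Set.univ).toReal := by
    simp [Measure.real_def]
  rw [hS, hT] at h
  set S := ∫ x, g x ^ 2 ∂μ with hSdef
  have hS0 : 0 ≤ S := integral_nonneg fun x => sq_nonneg _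
  have hT0 : 0 ≤ (μ Set.univ).toReal := ENNReal.toReal_nonneg
  have hI0 : 0 ≤ ∫ x, g x ∂μ := integral_nonneg hg0
  calc (∫ x, g x ∂μ)^2 ≤ (S ^ (1/2:ℝ) * (μ Set.univ).toReal ^ (1/2:ℝ))^2 :=
        pow_le_pow_left₀ hI0 h 2
    _ = (μ Set.univ).toReal * S := by
        rw [mul_pow, ← Real.rpow_natCast (S ^ (1/2:ℝ)) 2,
          ← Real.rpow_natCast ((μ Set.univ).toReal ^ (1/2:ℝ)) 2,
          ← Real.rpow_mul hS0, ← Real.rpow_mul hT0]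
        norm_num [mul_comm]

set_option maxHeartbeats 1000000 in
theorem stmt16 (q : ℕ) (F : Measure (Fin q → ℝ)) [IsProbabilityMeasure F]
    (M : (Fin q → ℝ) → ℝ) (hM_nonneg : ∀ x, 0 ≤ M x)
    (hM_L2 : MemLp M 2 F)
    (hratio : Tendsto (fun h : ℝ =>
        (∫ x, ((F (Metric.closedBall x h)).toReal) ^ 3 ∂F) /
          (∫ x, (F (Metric.closedBall x h)).toReal ∂F) ^ 2)
      (𝓝[>] (0 : ℝ)) (𝓝 0)) :
    Tendsto (fun h : ℝ =>
        (∫ x, (∫ y in Metric.closedBall x h, M y ∂F) ^ 2 ∂F) /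
          (∫ x, (F (Metric.closedBall x h)).toReal ∂F))
      (𝓝[>] (0 : ℝ)) (𝓝 0) := by
  classical
  set M' : (Fin q → ℝ) → ℝ := fun y => max (hM_L2.1.mk M y) 0 with hM'def
  have hM'sm : StronglyMeasurable M' := hM_L2.1.stronglyMeasurable_mk.sup stronglyMeasurable_const
  have hMM' : M =ᵐ[F] M' := by
    filter_upwards [hM_L2.1.ae_eq_mk] with y hy
    rw [hM'def]; simp only; rw [← hy, max_eq_left (hM_nonneg y)]
  have hM'0 : ∀ y, 0 ≤ M' y := fun y => le_max_right _ _
  have hM'2 : MemLp M' 2 F := hM_L2.ae_eq hMM'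
  have hM'int : Integrable M' F := hM'2.integrable one_le_two
  have hM'sq : Integrable (fun y => M' y ^ 2) F := hM'2.integrable_sq
  have hgoal_eq : ∀ h : ℝ, (∫ x, (∫ y in Metric.closedBall x h, M y ∂F) ^ 2 ∂F)
      = ∫ x, (∫ y in Metric.closedBall x h, M' y ∂F) ^ 2 ∂F := by
    intro h
    refine integral_congr_ae (ae_of_all _ fun x => ?_)
    have hx : (∫ y in Metric.closedBall x h, M y ∂F) = ∫ y in Metric.closedBall x h, M' y ∂F :=
      integral_congr_ae (ae_restrict_of_ae hMM')
    simp only [hx]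
  simp only [hgoal_eq]
  -- measurability of ball-measure function
  have mB : ∀ h : ℝ, Measurable fun x : Fin q → ℝ => F (Metric.closedBall x h) := by
    intro h
    have hs : MeasurableSet {p : (Fin q → ℝ) × (Fin q → ℝ) | dist p.2 p.1 ≤ h} :=
      (isClosed_le (continuous_snd.dist continuous_fst) continuous_const).measurableSet
    have heq : (fun x : Fin q → ℝ => F (Metric.closedBall x h))
        = fun x => F (Prod.mk x ⁻¹' {p : (Fin q → ℝ) × (Fin q → ℝ) | dist p.2 p.1 ≤ h}) := by
      funext x
      have hball : Metric.closedBall x h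
          = Prod.mk x ⁻¹' {p : (Fin q → ℝ) × (Fin q → ℝ) | dist p.2 p.1 ≤ h} := by
        ext y; simp [Metric.mem_closedBall]
      rw [hball]
    rw [heq]; exact measurable_measure_prodMk_left hs
  have ha_meas : ∀ h : ℝ, Measurable fun x => (F (Metric.closedBall x h)).toReal :=
    fun h => (mB h).ennreal_toReal
  have ha_nonneg : ∀ (h : ℝ) (x : Fin q → ℝ), 0 ≤ (F (Metric.closedBall x h)).toReal :=
    fun _ _ => ENNReal.toReal_nonneg
  have ha_le_one : ∀ (h : ℝ) (x : Fin q → ℝ), (F (Metric.closedBall x h)).toReal ≤ 1 :=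
    fun h x => by
      simpa using ENNReal.toReal_mono ENNReal.one_ne_top (prob_le_one (μ := F))
  have ha_int : ∀ (h : ℝ) (k : ℕ), Integrable (fun x => (F (Metric.closedBall x h)).toReal ^ k) F := by
    intro h k
    refine Integrable.mono' (integrable_const 1) (((ha_meas h).pow_const k).aestronglyMeasurable)
      (ae_of_all _ fun x => ?_)
    rw [Real.norm_eq_abs, abs_of_nonneg (pow_nonneg (ha_nonneg h x) k)]
    exact pow_le_one₀ (ha_nonneg h x) (ha_le_one h x)
  have ha_int1 : ∀ h : ℝ, Integrable (fun x => (F (Metric.closedBall x h)).toReal) F := by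
    intro h; simpa using ha_int h 1
  have hphi_nonneg : ∀ h : ℝ, 0 ≤ ∫ x, (F (Metric.closedBall x h)).toReal ∂F :=
    fun h => integral_nonneg (ha_nonneg h)
  have hphi_le_one : ∀ h : ℝ, (∫ x, (F (Metric.closedBall x h)).toReal ∂F) ≤ 1 := by
    intro h
    calc ∫ x, (F (Metric.closedBall x h)).toReal ∂F ≤ ∫ _, (1:ℝ) ∂F :=
          integral_mono (ha_int1 h) (integrable_const 1) (ha_le_one h)
      _ = 1 := by simp
  -- tail integral tends to zero
  set A : ℕ → Set (Fin q → ℝ) := fun n => {y | (n:ℝ) < M' y} with hA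
  have hAmeas : ∀ n, MeasurableSet (A n) :=
    fun n => measurableSet_lt measurable_const hM'sm.measurable
  have hAanti : Antitone A := by
    intro n m hnm y hy
    simp only [hA, Set.mem_setOf_eq] at hy ⊢
    exact lt_of_le_of_lt (Nat.cast_le.2 hnm) hy
  have hAtend : Tendsto (fun n => ∫ y in A n, M' y ^ 2 ∂F) atTop (𝓝 0) := by
    have h0 : ⋂ n, A n = (∅ : Set (Fin q → ℝ)) := by
      ext y
      simp only [Set.mem_iInter, Set.mem_empty_iff_false, iff_false, not_forall]
      obtain ⟨n, hn⟩ := exists_nat_gt (M' y)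
      exact ⟨n, by simp [hA, not_lt.2 hn.le]⟩
    simpa [h0] using
      tendsto_setIntegral_of_antitone hAmeas hAanti ⟨0, hM'sq.integrableOn⟩
  refine NormedAddCommGroup.tendsto_nhds_zero.2 fun δ hδ => ?_
  obtain ⟨n₀, hn₀⟩ :=
    (hAtend.eventually (eventually_lt_nhds (show (0:ℝ) < δ/8 by positivity))).exists
  set γ : ℝ := (n₀ : ℝ) with hγdef
  have hγ0 : 0 ≤ γ := Nat.cast_nonneg _
  set ε : ℝ := ∫ y in A n₀, M' y ^ 2 ∂F with hεdef
  have hε0 : 0 ≤ ε := setIntegral_nonneg (hAmeas n₀) fun y _ => sq_nonneg _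
  have hεδ : ε < δ/8 := hn₀
  set t : ℝ := δ / (8 * (γ^2 + 1)) with htdef
  have ht0 : 0 < t := by positivity
  set ψ₀ : ℝ := t * (δ / (8 * (γ^2 + 1))) with hψ₀def
  have hψ₀0 : 0 < ψ₀ := by positivity
  -- the truncated function
  set g : (Fin q → ℝ) → ℝ := (A n₀).indicator M' with hgdef
  have hg0 : ∀ y, 0 ≤ g y := fun y => Set.indicator_nonneg (fun y _ => hM'0 y) y
  have hg_int : Integrable g F := hM'int.indicator (hAmeas n₀)
  have hg2 : MemLp g 2 F := hM'2.indicator (hAmeas n₀)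
  have hg_sq_int : Integrable (fun y => g y ^ 2) F := hg2.integrable_sq
  have hgsq : ∫ y, g y ^ 2 ∂F = ε := by
    rw [hεdef, ← integral_indicator (hAmeas n₀)]
    refine integral_congr_ae (ae_of_all _ fun y => ?_)
    by_cases hy : y ∈ A n₀ <;>
      simp [hgdef, Set.indicator_of_mem, Set.indicator_of_notMem, hy]
  have hsplit : ∀ y, M' y ≤ γ + g y := by
    intro y
    by_cases hy : y ∈ A n₀
    · rw [hgdef]; simp only [Set.indicator_of_mem hy]; linarith
    · rw [hgdef]; simp only [Set.indicator_of_notMem hy]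
      have : ¬ ((n₀ : ℝ) < M' y) := hy
      push_neg at this
      simpa using this
  -- pointwise key estimate
  have key : ∀ h : ℝ, (∫ x, (∫ y in Metric.closedBall x h, M' y ∂F) ^ 2 ∂F)
      ≤ ∫ x, (2*γ^2*(F (Metric.closedBall x h)).toReal^2
          + 2*ε*(F (Metric.closedBall x h)).toReal) ∂F := by
    intro h
    refine integral_mono_of_nonneg (ae_of_all _ fun x => sq_nonneg _)
      (((ha_int h 2).const_mul _).add ((ha_int1 h).const_mul _)) (ae_of_all _ fun x => ?_)
    show (∫ y in Metric.closedBall x h, M' y ∂F) ^ 2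
      ≤ 2*γ^2*(F (Metric.closedBall x h)).toReal^2 + 2*ε*(F (Metric.closedBall x h)).toReal
    set B := Metric.closedBall x h with hB
    set a := (F B).toReal with haa
    have ha0 : 0 ≤ a := ENNReal.toReal_nonneg
    have hΩ0 : 0 ≤ ∫ y in B, M' y ∂F := integral_nonneg fun y => hM'0 y
    have hV0 : 0 ≤ ∫ y in B, g y ∂F := integral_nonneg fun y => hg0 y
    have hΩV : ∫ y in B, M' y ∂F ≤ γ * a + ∫ y in B, g y ∂F := by
      calc ∫ y in B, M' y ∂F ≤ ∫ y in B, (γ + g y) ∂F :=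
            integral_mono hM'int.integrableOn
              ((integrable_const γ).add hg_int.integrableOn) hsplit
        _ = γ * a + ∫ y in B, g y ∂F := by
            rw [integral_add (integrable_const γ) hg_int.integrableOn, setIntegral_const,
              smul_eq_mul]
            rw [Measure.real_def, haa]
            ring
    have hCS : (∫ y in B, g y ∂F) ^ 2 ≤ a * ε := by
      have h1 := cs_aux (F.restrict B) hg0 (hg2.restrict B)
      rw [Measure.restrict_apply_univ] at h1
      have h3 : ∫ y in B, g y ^ 2 ∂F ≤ ε := by
        rw [← hgsq]
        exact setIntegral_le_integral hg_sq_int (ae_of_all _ fun y => sq_nonneg _)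
      calc (∫ y in B, g y ∂F) ^ 2 ≤ a * ∫ y in B, g y ^ 2 ∂F := h1
        _ ≤ a * ε := mul_le_mul_of_nonneg_left h3 ha0
    nlinarith [pow_le_pow_left₀ hΩ0 hΩV 2, sq_nonneg (γ * a - ∫ y in B, g y ∂F)]
  -- second moment estimate
  have key2 : ∀ h : ℝ, (∫ x, (F (Metric.closedBall x h)).toReal ^ 2 ∂F)
      ≤ t * (∫ x, (F (Metric.closedBall x h)).toReal ∂F)
        + (∫ x, (F (Metric.closedBall x h)).toReal ^ 3 ∂F) / t := by
    intro h
    have hpt : ∀ x, (F (Metric.closedBall x h)).toReal ^ 2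
        ≤ t * (F (Metric.closedBall x h)).toReal + (F (Metric.closedBall x h)).toReal ^ 3 / t := by
      intro x
      set a := (F (Metric.closedBall x h)).toReal with haa
      have ha0 : 0 ≤ a := ENNReal.toReal_nonneg
      have h6 : a^2 - t*a ≤ a^3 / t :=
        (le_div_iff₀ ht0).2 (by nlinarith [mul_nonneg ha0 (sq_nonneg (t - a))])
      linarith
    have hmono : (∫ x, (F (Metric.closedBall x h)).toReal ^ 2 ∂F)
        ≤ ∫ x, (t * (F (Metric.closedBall x h)).toReal
            + (F (Metric.closedBall x h)).toReal ^ 3 / t) ∂F :=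
      integral_mono (ha_int h 2)
        (((ha_int1 h).const_mul t).add ((ha_int h 3).div_const t)) hpt
    simp only [integral_add ((ha_int1 h).const_mul t) ((ha_int h 3).div_const t),
      integral_const_mul, integral_div] at hmono
    exact hmono
  -- conclude
  have hev : ∀ᶠ h : ℝ in 𝓝[>] (0:ℝ),
      (∫ x, ((F (Metric.closedBall x h)).toReal) ^ 3 ∂F) /
        (∫ x, (F (Metric.closedBall x h)).toReal ∂F) ^ 2 < ψ₀ :=
    hratio.eventually (eventually_lt_nhds hψ₀0)
  filter_upwards [hev] with h hψ
  show ‖(∫ x, (∫ y in Metric.closedBall x h, M' y ∂F) ^ 2 ∂F) /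
      (∫ x, (F (Metric.closedBall x h)).toReal ∂F)‖ < δ
  set φ := ∫ x, (F (Metric.closedBall x h)).toReal ∂F with hφdef
  set E₂ := ∫ x, (F (Metric.closedBall x h)).toReal ^ 2 ∂F with hE₂def
  set E₃ := ∫ x, (F (Metric.closedBall x h)).toReal ^ 3 ∂F with hE₃def
  set num := ∫ x, (∫ y in Metric.closedBall x h, M' y ∂F) ^ 2 ∂F with hnumdef
  have hnum0 : 0 ≤ num := integral_nonneg fun x => sq_nonneg _
  have hφ0 : 0 ≤ φ := hphi_nonneg h
  have hφ1 : φ ≤ 1 := hphi_le_one h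
  have hE₃0 : 0 ≤ E₃ := integral_nonneg fun x => pow_nonneg (ha_nonneg h x) 3
  rw [Real.norm_eq_abs, abs_of_nonneg (div_nonneg hnum0 hφ0)]
  rcases eq_or_lt_of_le hφ0 with hφz | hφpos
  · rw [← hφz, div_zero]; exact hδ
  · -- E₃ < ψ₀ * φ
    have hE₃lt : E₃ ≤ ψ₀ * φ := by
      have h1 : E₃ < ψ₀ * φ ^ 2 := (div_lt_iff₀ (by positivity)).1 hψ
      have h2 : φ ^ 2 ≤ φ := by
        simpa using pow_le_pow_of_le_one hφ0 hφ1 (show (1:ℕ) ≤ 2 by norm_num)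
      nlinarith
    -- num ≤ C * φ
    have hnum_le : num ≤ 2*γ^2*E₂ + 2*ε*φ := by
      have h1 := key h
      simp only [integral_add ((ha_int h 2).const_mul (2*γ^2)) ((ha_int1 h).const_mul (2*ε)),
        integral_const_mul] at h1
      exact h1
    have hE₂le : E₂ ≤ t * φ + E₃ / t := key2 h
    have hchain : num ≤ (2*γ^2*t + 2*γ^2*(ψ₀/t) + 2*ε) * φ := by
      have hc0 : (0:ℝ) ≤ 2*γ^2 := by positivity
      have h2 : E₃ / t ≤ ψ₀ / t * φ := by
        rw [div_mul_eq_mul_div]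
        gcongr
      calc num ≤ 2*γ^2*E₂ + 2*ε*φ := hnum_le
        _ ≤ 2*γ^2*(t*φ + E₃/t) + 2*ε*φ := by
            have := mul_le_mul_of_nonneg_left hE₂le hc0
            linarith
        _ ≤ 2*γ^2*(t*φ + ψ₀/t*φ) + 2*ε*φ := by
            have h3 : t*φ + E₃/t ≤ t*φ + ψ₀/t*φ := by linarith
            have := mul_le_mul_of_nonneg_left h3 hc0
            linarith
        _ = (2*γ^2*t + 2*γ^2*(ψ₀/t) + 2*ε) * φ := by ring
    have hC : 2*γ^2*t + 2*γ^2*(ψ₀/t) + 2*ε < δ := by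
      have hψt : ψ₀ / t = δ / (8*(γ^2+1)) := by
        rw [hψ₀def]; field_simp
      have hd : (0:ℝ) < 8*(γ^2+1) := by positivity
      have h1 : 2*γ^2*t + 2*γ^2*(ψ₀/t) = (4*γ^2*δ)/(8*(γ^2+1)) := by
        rw [hψt, htdef]; ring
      have h2 : (4*γ^2*δ)/(8*(γ^2+1)) ≤ δ/2 := by
        rw [div_le_div_iff₀ hd (by norm_num : (0:ℝ) < 2)]
        nlinarith [mul_nonneg hδ.le (sq_nonneg γ)]
      linarith
    calc num / φ ≤ 2*γ^2*t + 2*γ^2*(ψ₀/t) + 2*ε := (div_le_iff₀ hφpos).2 hchain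
      _ < δ := hC
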